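/- Let G be a finite connected simple graph, R a commutative ring, N an R-module, and D a function from the edge set of G to N such that for every vertex v of G and every edge e of G incident to v, the element D(e) lies in the R-submodule of N generated by the values D(e') over all edges e' ≠ e of G incident to v. Then for every spanning tree T of G (a connected acyclic subgraph containing all vertices of G whose edges are edges of G), the R-submodule of N generated by the values of D on the edges of G not in T equals the R-submodule generated by the values of D on all edges of G. -/

import Mathlib

open SimpleGraph Submodule

/-- A finite acyclic graph with at least one edge has a leaf: a vertex with a
unique neighbor. -/
lemma exists_leaf_aux {V : Type*} [Fintype V] {T : SimpleGraph V} (hT : T.IsAcyclic)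
    {a₀ b₀ : V} (hab : T.Adj a₀ b₀) :
    ∃ v w, T.Adj v w ∧ ∀ u, T.Adj v u → u = w := by
  classical
  set P : ℕ → Prop := fun n => ∃ (a b : V) (p : T.Walk a b), p.IsPath ∧ p.length = n with hPdef
  have hP1 : P 1 := by
    refine ⟨a₀, b₀, Walk.cons hab Walk.nil, ?_, by simp⟩
    simp [Walk.cons_isPath_iff, hab.ne]
  have hb : (1 : ℕ) ≤ Fintype.card V := Fintype.card_pos_iff.mpr ⟨a₀⟩
  have hPN : P (Nat.findGreatest P (Fintype.card V)) := Nat.findGreatest_spec hb hP1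
  have hN1 : 1 ≤ Nat.findGreatest P (Fintype.card V) := Nat.le_findGreatest hb hP1
  obtain ⟨a, b, p, hp, hlen⟩ := hPN
  cases p with
  | nil => rw [← hlen] at hN1; simp at hN1
  | @cons _ c _ h q =>
    refine ⟨a, c, h, fun u hu => ?_⟩
    by_cases hmem : u ∈ (Walk.cons h q).support
    · have hsingle : ((Walk.cons h q).takeUntil u hmem) = Walk.cons hu Walk.nil := by
        have := hT.path_unique ⟨(Walk.cons h q).takeUntil u hmem, hp.takeUntil hmem⟩
          ⟨Walk.cons hu Walk.nil, by simp [Walk.cons_isPath_iff, hu.ne]⟩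
        exact congrArg Subtype.val this
      have h2 := (Walk.cons h q).take_spec hmem
      rw [hsingle] at h2
      have := congrArg (fun w => w.getVert 1) h2
      simpa using this
    · exfalso
      have hnew : ((Walk.cons h q).cons hu.symm).IsPath :=
        (Walk.cons_isPath_iff _ _).mpr ⟨hp, hmem⟩
      have hlt : (Walk.cons h q).length + 1 < Fintype.card V := by
        simpa using hnew.length_lt
      have := Nat.findGreatest_is_greatest (P := P) (n := Fintype.card V)
        (k := (Walk.cons h q).length + 1) (by omega) hlt.le
      exact this ⟨u, b, (Walk.cons h q).cons hu.symm, hnew, by simp⟩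

lemma nontree_edges_span_aux {V : Type*} [Fintype V] (G : SimpleGraph V)
    {R : Type*} [CommRing R]
    {N : Type*} [AddCommGroup N] [Module R N] (D : Sym2 V → N)
    (hD : ∀ v : V, ∀ e ∈ G.edgeSet, v ∈ e →
      D e ∈ Submodule.span R (D '' {e' | e' ∈ G.edgeSet ∧ e' ≠ e ∧ v ∈ e'})) :
    ∀ (n : ℕ) (T : SimpleGraph V), T.edgeSet.ncard = n → T ≤ G → T.IsAcyclic →
      Submodule.span R (D '' {e | e ∈ G.edgeSet ∧ e ∉ T.edgeSet})
        = Submodule.span R (D '' G.edgeSet) := by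
  classical
  intro n
  induction n with
  | zero =>
    intro T hcard _ _
    have hempty : T.edgeSet = ∅ := (Set.ncard_eq_zero (Set.toFinite _)).mp hcard
    congr 1
    congr 1
    ext e
    simp [hempty]
  | succ n ih =>
    intro T hcard hle hT
    have hne : T.edgeSet.Nonempty := by
      rw [Set.nonempty_iff_ne_empty]
      intro h
      rw [h] at hcard; simp at hcard
    obtain ⟨e, he⟩ := hne
    obtain ⟨a₀, b₀, hab⟩ : ∃ a b, T.Adj a b := by
      induction e with
      | h x y => exact ⟨x, y, he⟩
    obtain ⟨v, w, hvw, huniq⟩ := exists_leaf_aux hT hab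
    set e₀ : Sym2 V := s(v, w) with he₀
    have he₀T : e₀ ∈ T.edgeSet := hvw
    have he₀G : e₀ ∈ G.edgeSet := edgeSet_mono hle he₀T
    set T' := T.deleteEdges {e₀} with hT'
    have hT'edge : T'.edgeSet = T.edgeSet \ {e₀} := edgeSet_deleteEdges _
    have hT'card : T'.edgeSet.ncard = n := by
      rw [hT'edge, Set.ncard_diff_singleton_of_mem he₀T, hcard]
      omega
    have hT'le : T' ≤ G := le_trans (deleteEdges_le _) hle
    have hT'ac : T'.IsAcyclic := fun _ c hc => hT _ (hc.mapLe (deleteEdges_le _))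
    have hIH := ih T' hT'card hT'le hT'ac
    -- the non-T' edges are the non-T edges together with e₀
    have hset : {e | e ∈ G.edgeSet ∧ e ∉ T'.edgeSet}
        = {e | e ∈ G.edgeSet ∧ e ∉ T.edgeSet} ∪ {e₀} := by
      ext x
      simp only [hT'edge, Set.mem_setOf_eq, Set.mem_diff, Set.union_singleton, Set.mem_insert_iff,
        Set.mem_singleton_iff]
      constructor
      · rintro ⟨hxG, hx⟩
        by_cases hxe : x = e₀
        · exact Or.inl hxe
        · exact Or.inr ⟨hxG, fun hxT => hx ⟨hxT, hxe⟩⟩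
      · rintro (rfl | ⟨hxG, hxT⟩)
        · exact ⟨he₀G, fun h => h.2 rfl⟩
        · exact ⟨hxG, fun h => hxT h.1⟩
    -- D e₀ lies in the span of the non-T edges
    have hD0 : D e₀ ∈ Submodule.span R (D '' {e | e ∈ G.edgeSet ∧ e ∉ T.edgeSet}) := by
      refine Submodule.span_mono (Set.image_mono ?_) (hD v e₀ he₀G (Sym2.mem_mk_left v w))
      rintro x ⟨hxG, hxne, hxv⟩
      refine ⟨hxG, fun hxT => ?_⟩
      obtain ⟨u, rfl⟩ := Sym2.mem_iff_exists.mp hxv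
      have : T.Adj v u := hxT
      exact hxne (by rw [huniq u this])
    rw [← hIH, hset, Set.image_union, Submodule.span_union]
    refine le_antisymm le_sup_left (sup_le le_rfl ?_)
    rw [Set.image_singleton, Submodule.span_le, Set.singleton_subset_iff]
    exact hD0

/-- If, at every vertex `v` of a finite connected simple graph `G`, the value of `D`
on each edge incident to `v` lies in the span of the values of `D` on the other edges
incident to `v`, then for any spanning tree `T` of `G` the values of `D` on the
non-tree edges span the same submodule as the values of `D` on all edges. -/
theorem nontree_edges_span {V : Type*} [Fintype V] (G : SimpleGraph V)
    (hG : G.Connected) {R : Type*} [CommRing R]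
    {N : Type*} [AddCommGroup N] [Module R N] (D : Sym2 V → N)
    (hD : ∀ v : V, ∀ e ∈ G.edgeSet, v ∈ e →
      D e ∈ Submodule.span R (D '' {e' | e' ∈ G.edgeSet ∧ e' ≠ e ∧ v ∈ e'})) :
    ∀ T : SimpleGraph V, T ≤ G → T.IsTree →
      Submodule.span R (D '' {e | e ∈ G.edgeSet ∧ e ∉ T.edgeSet})
        = Submodule.span R (D '' G.edgeSet) := by
  intro T hle hT
  exact nontree_edges_span_aux G D hD T.edgeSet.ncard T rfl hle hT.IsAcyclic
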